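/- (Virial identity, Section 5) Let q ∈ ℝ and for y ∈ ℝ set F(y) = exp((q − 2√3·y)/2). On the open set U = {y ∈ ℝ : 1 − 4F(y) + F(y)² > 0}, define Ψ(y) = ln((1 − 4F(y) + F(y)²)/(1 + F(y))²). Then for every y ∈ U: (Ψ′(y))²/2 = exp(Ψ(y)) + exp(−2Ψ(y))/2 − 3/2. In other words, the kinetic energy density E_K = (∂_yΨ)²/2 and potential energy density E_P = e^Ψ + e^{−2Ψ}/2 − 3/2 of the stationary Tzitzeica 1-soliton are equal. -/

import Mathlib

/-- Virial identity (Section 5): for the stationary Tzitzeica 1-soliton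
Ψ = ln((1 − 4F + F²)/(1 + F)²) with F(y) = exp((q − 2√3 y)/2), the kinetic energy
density (Ψ′)²/2 equals the potential energy density eᴾ + e^{−2Ψ}/2 − 3/2 at every
point where 1 − 4F + F² > 0. -/
theorem virial_identity (q : ℝ) (F Ψ : ℝ → ℝ)
    (hF : ∀ y, F y = Real.exp ((q - 2 * Real.sqrt 3 * y) / 2))
    (hΨ : ∀ y, Ψ y = Real.log ((1 - 4 * F y + (F y) ^ 2) / (1 + F y) ^ 2)) :
    ∀ y : ℝ, 0 < 1 - 4 * F y + (F y) ^ 2 →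
      (deriv Ψ y) ^ 2 / 2
        = Real.exp (Ψ y) + Real.exp (-2 * Ψ y) / 2 - 3 / 2 := by
  intro y hy
  have hFfun : F = fun y => Real.exp ((q - 2 * Real.sqrt 3 * y) / 2) := funext hF
  have hΨfun : Ψ = fun y => Real.log ((1 - 4 * F y + (F y) ^ 2) / (1 + F y) ^ 2) :=
    funext hΨ
  have hFpos : 0 < F y := by rw [hF]; exact Real.exp_pos _
  have h1t : (0:ℝ) < 1 + F y := by linarith
  have h1tne : (1 + F y) ≠ 0 := ne_of_gt h1t
  have hDpos : (0:ℝ) < (1 + F y) ^ 2 := pow_pos h1t 2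
  have hDne : ((1 + F y) ^ 2 : ℝ) ≠ 0 := ne_of_gt hDpos
  have hNne : (1 - 4 * F y + (F y) ^ 2 : ℝ) ≠ 0 := ne_of_gt hy
  have hgpos : 0 < (1 - 4 * F y + (F y) ^ 2) / (1 + F y) ^ 2 := div_pos hy hDpos
  -- derivative of the exponent
  have h2 : HasDerivAt (fun y : ℝ => q - 2 * Real.sqrt 3 * y) (-(2 * Real.sqrt 3)) y := by
    simpa using ((hasDerivAt_id y).const_mul (2 * Real.sqrt 3)).const_sub q
  have h1 : HasDerivAt (fun y : ℝ => (q - 2 * Real.sqrt 3 * y) / 2) (-Real.sqrt 3) y := by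
    have := h2.div_const 2
    rw [show (-Real.sqrt 3) = -(2 * Real.sqrt 3) / 2 by ring]
    exact this
  -- derivative of F
  have hF' : HasDerivAt F (F y * -Real.sqrt 3) y := by
    rw [hFfun]
    exact h1.exp
  -- derivative of numerator and denominator
  have hN : HasDerivAt (fun y => 1 - 4 * F y + (F y) ^ 2)
      (-(4 * (F y * -Real.sqrt 3)) + 2 * F y ^ 1 * (F y * -Real.sqrt 3)) y :=
    ((hF'.const_mul 4).const_sub 1).add (hF'.pow 2)
  have hD : HasDerivAt (fun y => (1 + F y) ^ 2)
      (2 * (1 + F y) ^ 1 * (F y * -Real.sqrt 3)) y :=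
    (hF'.const_add 1).pow 2
  have hg : HasDerivAt (fun y => (1 - 4 * F y + (F y) ^ 2) / (1 + F y) ^ 2)
      (((-(4 * (F y * -Real.sqrt 3)) + 2 * F y ^ 1 * (F y * -Real.sqrt 3)) * (1 + F y) ^ 2
        - (1 - 4 * F y + (F y) ^ 2) * (2 * (1 + F y) ^ 1 * (F y * -Real.sqrt 3)))
        / ((1 + F y) ^ 2) ^ 2) y := hN.div hD hDne
  have hΨ' : HasDerivAt Ψ
      ((((-(4 * (F y * -Real.sqrt 3)) + 2 * F y ^ 1 * (F y * -Real.sqrt 3)) * (1 + F y) ^ 2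
        - (1 - 4 * F y + (F y) ^ 2) * (2 * (1 + F y) ^ 1 * (F y * -Real.sqrt 3)))
        / ((1 + F y) ^ 2) ^ 2) / ((1 - 4 * F y + (F y) ^ 2) / (1 + F y) ^ 2)) y := by
    rw [hΨfun]
    exact hg.log (ne_of_gt hgpos)
  have hderiv : deriv Ψ y
      = Real.sqrt 3 * (6 * F y * (1 - F y) / ((1 - 4 * F y + (F y) ^ 2) * (1 + F y))) := by
    rw [hΨ'.deriv]
    field_simp
    ring
  have hexp1 : Real.exp (Ψ y) = (1 - 4 * F y + (F y) ^ 2) / (1 + F y) ^ 2 := by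
    rw [hΨ y, Real.exp_log hgpos]
  have hexp2 : Real.exp (-2 * Ψ y)
      = ((1 + F y) ^ 2 / (1 - 4 * F y + (F y) ^ 2)) ^ 2 := by
    rw [show (-2 * Ψ y) = -(Ψ y) + -(Ψ y) by ring, Real.exp_add, Real.exp_neg, hΨ y,
      Real.exp_log hgpos]
    rw [inv_div]
    ring
  rw [hderiv, hexp1, hexp2, mul_pow, Real.sq_sqrt (by norm_num : (3:ℝ) ≥ 0)]
  have hNne' : (1 - F y * 4 + F y ^ 2 : ℝ) ≠ 0 := by rw [mul_comm]; exact hNne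
  field_simp
  ring
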